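/- Let N be a network and let a, b ∈ ℝ^n_{>0}. Then: (i) for every Hill-type kinetics K = (κ,δ,v) there exists a power-law kinetics (λ,w) such that I(v) = I(w), f_K(a) = f_{λ,w}(a) and f_K(b) = f_{λ,w}(b); (ii) for every power-law kinetics (λ,w) there exists a Hill-type kinetics K = (κ,δ,v) such that I(v) = I(w), f_K(a) = f_{λ,w}(a) and f_K(b) = f_{λ,w}(b). In particular, f_{λ,w}(a) = f_{λ,w}(b) for some power-law kinetics (λ,w) if and only if f_K(a) = f_K(b) for some Hill-type kinetics K = (κ,δ,v) with I(v) = I(w). -/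

import Mathlib

noncomputable section

namespace CRN

variable {n m : ℕ}

/-- The orthogonal complement of a subspace of `Fin n → ℝ` with respect to the
standard scalar product. -/
def orthComp (F : Submodule ℝ (Fin n → ℝ)) : Submodule ℝ (Fin n → ℝ) where
  carrier := {w | ∀ v ∈ F, ∑ i, w i * v i = 0}
  add_mem' := by
    intro a b ha hb v hv
    have h1 := ha v hv
    have h2 := hb v hv
    have key : ∀ i, (a + b) i * v i = a i * v i + b i * v i := fun i => by
      simp [add_mul]
    calc ∑ i, (a + b) i * v i
        = ∑ i, (a i * v i + b i * v i) := Finset.sum_congr rfl (fun i _ => key i)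
      _ = (∑ i, a i * v i) + ∑ i, b i * v i := Finset.sum_add_distrib
      _ = 0 := by rw [h1, h2, add_zero]
  zero_mem' := by
    intro v hv
    simp
  smul_mem' := by
    intro t a ha v hv
    have h1 := ha v hv
    simp only [Set.mem_setOf_eq, Pi.smul_apply, smul_eq_mul]
    calc ∑ i, t * a i * v i
        = t * ∑ i, a i * v i := by
          rw [Finset.mul_sum]
          exact Finset.sum_congr rfl fun i _ => (mul_assoc _ _ _)
      _ = 0 := by rw [h1, mul_zero]

/-- `ω` is a reduced basis of `F^⊥`: it is a basis of the orthogonal complement of `F`,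
`ω i` has `i`-th coordinate `1`, and `j`-th coordinate `0` for every `j < d`, `j ≠ i`. -/
def IsReducedBasis (d : ℕ) (F : Submodule ℝ (Fin n → ℝ)) (ω : Fin d → Fin n → ℝ) : Prop :=
  (∀ i, ω i ∈ orthComp F) ∧
  Submodule.span ℝ (Set.range ω) = orthComp F ∧
  LinearIndependent ℝ ω ∧
  (∀ (i : Fin d) (j : Fin n), (j : ℕ) = (i : ℕ) → ω i j = 1) ∧
  (∀ (i : Fin d) (j : Fin n), (j : ℕ) < d → (j : ℕ) ≠ (i : ℕ) → ω i j = 0)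

/-- The matrix whose top `d` rows are `ω` and whose remaining rows agree with `M`. -/
def tildeMat (d : ℕ) (ω : Fin d → Fin n → ℝ) (M : Matrix (Fin n) (Fin n) ℝ) :
    Matrix (Fin n) (Fin n) ℝ :=
  Matrix.of fun i j => if h : (i : ℕ) < d then ω ⟨(i : ℕ), h⟩ j else M i j

/-- The stoichiometric matrix: `r`-th column is `y' r - y r`. -/
def stoich (y y' : Fin m → Fin n → ℝ) : Matrix (Fin n) (Fin m) ℝ :=
  Matrix.of fun i r => y' r i - y r i

/-- The stoichiometric subspace: the span of the reaction vectors `y' r - y r`. -/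
def stoichSpan (y y' : Fin m → Fin n → ℝ) : Submodule ℝ (Fin n → ℝ) :=
  Submodule.span ℝ (Set.range fun r => (fun i => y' r i - y r i))

/-- The matrix whose `r`-th row is the kinetic-order vector `v r`. -/
def Zmat (v : Fin m → Fin n → ℝ) : Matrix (Fin m) (Fin n) ℝ :=
  Matrix.of fun r i => v r i

/-- The Jacobian matrix of `f` at `c`. -/
def jac (f : (Fin n → ℝ) → Fin n → ℝ) (c : Fin n → ℝ) : Matrix (Fin n) (Fin n) ℝ :=
  Matrix.of fun i j => fderiv ℝ (fun x => f x i) c (Pi.single j 1)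

/-- The species formation rate function of a kinetics `K`. -/
def specForm (y y' : Fin m → Fin n → ℝ) (K : Fin m → (Fin n → ℝ) → ℝ) (c : Fin n → ℝ) :
    Fin n → ℝ :=
  fun i => ∑ r, K r c * (y' r i - y r i)

/-- The power-law rate functions with rate vector `κ` and kinetic order `v`. -/
def powerLaw (κ : Fin m → ℝ) (v : Fin m → Fin n → ℝ) : Fin m → (Fin n → ℝ) → ℝ :=
  fun r c => κ r * ∏ j, c j ^ v r j

/-- The power-law species formation rate function. -/
def plf (y y' : Fin m → Fin n → ℝ) (κ : Fin m → ℝ) (v : Fin m → Fin n → ℝ) (c : Fin n → ℝ) :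
    Fin n → ℝ :=
  fun i => ∑ r, κ r * (∏ j, c j ^ v r j) * (y' r i - y r i)

/-- The extended rate function associated with a reduced basis `ω` and `f`. -/
def tildeF (d : ℕ) (ω : Fin d → Fin n → ℝ) (f : (Fin n → ℝ) → Fin n → ℝ) (c : Fin n → ℝ) :
    Fin n → ℝ :=
  fun i => if h : (i : ℕ) < d then ∑ j, ω ⟨(i : ℕ), h⟩ j * c j else f c i

/-- The extended rate function with the bottom `s` components negated. -/
def hatF (d : ℕ) (ω : Fin d → Fin n → ℝ) (f : (Fin n → ℝ) → Fin n → ℝ) (c : Fin n → ℝ) :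
    Fin n → ℝ :=
  fun i => if h : (i : ℕ) < d then ∑ j, ω ⟨(i : ℕ), h⟩ j * c j else -(f c i)

/-- Membership in the positive orthant. -/
def Pos (c : Fin n → ℝ) : Prop := ∀ i, 0 < c i

/-- The network is injective over the power-law kinetics with fixed kinetic order `v`. -/
def InjOverPL (y y' : Fin m → Fin n → ℝ) (v : Fin m → Fin n → ℝ) : Prop :=
  ∀ κ : Fin m → ℝ, (∀ r, 0 < κ r) → ∀ a b : Fin n → ℝ, Pos a → Pos b → a ≠ b →
    a - b ∈ stoichSpan y y' → plf y y' κ v a ≠ plf y y' κ v b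

/-- An influence specification takes values in `{-1, 0, 1}`. -/
def IsInfluence (I : Fin m → Fin n → ℝ) : Prop := ∀ r i, I r i = -1 ∨ I r i = 0 ∨ I r i = 1

/-- The influence specification associated with a kinetic order `v`. -/
def infOf (v : Fin m → Fin n → ℝ) : Fin m → Fin n → ℝ := fun r i => Real.sign (v r i)

/-- `v ∈ Σ(I)`: the kinetic order `v` has associated influence specification `I`. -/
def InSigma (I : Fin m → Fin n → ℝ) (v : Fin m → Fin n → ℝ) : Prop :=
  ∀ r i, Real.sign (v r i) = I r i

/-- The partial order `I' ≼ I` on influence specifications. -/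
def Preceq (I' I : Fin m → Fin n → ℝ) : Prop :=
  ∀ r i, (I' r i = 1 → I r i = 1) ∧ (I' r i = -1 → I r i = -1)

/-- The matrix `M̃(v)`: top `d` rows `ω`, bottom rows from `A ⬝ Z(v)`. -/
def Mt (y y' : Fin m → Fin n → ℝ) (d : ℕ) (ω : Fin d → Fin n → ℝ)
    (v : Fin m → Fin n → ℝ) : Matrix (Fin n) (Fin n) ℝ :=
  tildeMat d ω (stoich y y' * Zmat v)

/-- The influence specification `I` has a signed determinant. -/
def SignedDet (y y' : Fin m → Fin n → ℝ) (d : ℕ) (ω : Fin d → Fin n → ℝ)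
    (I : Fin m → Fin n → ℝ) : Prop :=
  ∀ v w, InSigma I v → InSigma I w →
    Real.sign (Mt y y' d ω v).det = Real.sign (Mt y y' d ω w).det

/-- The influence specification `I` is sign-nonsingular (SNS). -/
def IsSNS (y y' : Fin m → Fin n → ℝ) (d : ℕ) (ω : Fin d → Fin n → ℝ)
    (I : Fin m → Fin n → ℝ) : Prop :=
  SignedDet y y' d ω I ∧ ∀ v, InSigma I v → (Mt y y' d ω v).det ≠ 0

/-- `Ω` is an admissible kinetics domain: `ℝ^n_{>0} ⊆ Ω ⊆ ℝ^n_{≥0}`. -/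
def KinDom (Ω : Set (Fin n → ℝ)) : Prop :=
  {c : Fin n → ℝ | ∀ i, 0 < c i} ⊆ Ω ∧ Ω ⊆ {c : Fin n → ℝ | ∀ i, 0 ≤ c i}

/-- The rate functions are nonnegative on the domain. -/
def KinNonneg (Ω : Set (Fin n → ℝ)) (K : Fin m → (Fin n → ℝ) → ℝ) : Prop :=
  ∀ r, ∀ c ∈ Ω, 0 ≤ K r c

/-- `I_r^+ ⊆ supp c`. -/
def PosSupp (I : Fin m → Fin n → ℝ) (r : Fin m) (c : Fin n → ℝ) : Prop :=
  ∀ i, I r i = 1 → c i ≠ 0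

/-- The kinetics `K` respects the influence specification `I`. -/
def Respects (Ω : Set (Fin n → ℝ)) (K : Fin m → (Fin n → ℝ) → ℝ)
    (I : Fin m → Fin n → ℝ) : Prop :=
  ∀ c ∈ Ω, ∀ r, (0 < K r c ↔ PosSupp I r c)

/-- The kinetics `K` is strictly monotonic with respect to `I`. -/
def StrictlyMonotonic (Ω : Set (Fin n → ℝ)) (K : Fin m → (Fin n → ℝ) → ℝ)
    (I : Fin m → Fin n → ℝ) : Prop :=
  Respects Ω K I ∧
  ∀ (r : Fin m) (c d : Fin n → ℝ), c ∈ Ω → d ∈ Ω → PosSupp I r c → PosSupp I r d →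
    ∀ i, (∀ j, j ≠ i → c j = d j) →
      ((I r i = 1 → c i < d i → K r c < K r d) ∧
       (I r i = -1 → c i < d i → K r d < K r c) ∧
       (I r i = 0 → K r c = K r d))

/-- The kinetics `K` is differentiable with respect to `I`. -/
def DiffWrt (Ω : Set (Fin n → ℝ)) (K : Fin m → (Fin n → ℝ) → ℝ)
    (I : Fin m → Fin n → ℝ) : Prop :=
  Respects Ω K I ∧
  (∀ r, ∀ c ∈ Ω, ContinuousWithinAt (K r) Ω c) ∧
  (∀ (r : Fin m) (c : Fin n → ℝ), (∀ i, 0 < c i) → DifferentiableAt ℝ (K r) c) ∧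
  (∀ (r : Fin m) (c : Fin n → ℝ), (∀ i, 0 < c i) → ∀ i,
     Real.sign (fderiv ℝ (K r) c (Pi.single i 1)) = I r i)

/-- `a` and `b` are non-overlapping with respect to `I`. -/
def NonOverlap (I : Fin m → Fin n → ℝ) (a b : Fin n → ℝ) : Prop :=
  ∀ r, ¬ PosSupp I r a → PosSupp I r b

/-- The kinetics `K` is weakly monotonic with respect to `I`. -/
def WeaklyMonotonic (y : Fin m → Fin n → ℝ) (Ω : Set (Fin n → ℝ))
    (K : Fin m → (Fin n → ℝ) → ℝ) (I : Fin m → Fin n → ℝ) : Prop :=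
  ∀ a ∈ Ω, ∀ b ∈ Ω, NonOverlap I a b → ∀ r,
    (K r b < K r a → ∃ i, Real.sign (a i - b i) = I r i ∧ I r i ≠ 0) ∧
    (K r a = K r b →
      ((∀ i, y r i ≠ 0 → a i = b i) ∨
        ∃ i j, i ≠ j ∧ Real.sign (a i - b i) = I r i ∧ I r i ≠ 0 ∧
          Real.sign (a j - b j) = -(I r j) ∧ I r j ≠ 0))

/-- A square real matrix is a P-matrix: all principal minors are positive. -/
def IsPMatrix {N : ℕ} (M : Matrix (Fin N) (Fin N) ℝ) : Prop :=
  ∀ J : Finset (Fin N),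
    0 < (M.submatrix (fun i : {x // x ∈ J} => (i : Fin N))
          (fun j : {x // x ∈ J} => (j : Fin N))).det

/-- The minor `det(A_{J,C})` of the stoichiometric matrix. -/
def subDetA (y y' : Fin m → Fin n → ℝ) (s : ℕ) (J : Finset (Fin n)) (C : Finset (Fin m))
    (hJ : J.card = s) (hC : C.card = s) : ℝ :=
  ((stoich y y').submatrix (fun a => (J.orderIsoOfFin hJ a).1)
    (fun b => (C.orderIsoOfFin hC b).1)).det

/-- The minor `det(Z(v)_{C,J})`. -/
def subDetZ (v : Fin m → Fin n → ℝ) (s : ℕ) (C : Finset (Fin m)) (J : Finset (Fin n))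
    (hC : C.card = s) (hJ : J.card = s) : ℝ :=
  ((Zmat v).submatrix (fun a => (C.orderIsoOfFin hC a).1)
    (fun b => (J.orderIsoOfFin hJ b).1)).det

/-- The Hill-type species formation rate function. -/
def hillf (y y' : Fin m → Fin n → ℝ) (κ : Fin m → ℝ) (δ v : Fin m → Fin n → ℝ)
    (c : Fin n → ℝ) : Fin n → ℝ :=
  fun i => ∑ r, κ r * (∏ j, (c j ^ v r j) / (δ r j + c j ^ v r j)) * (y' r i - y r i)



open Finset in
lemma prod_transfer {n : ℕ} (P Q X Y : Fin n → ℝ) (hX : ∀ j, X j ≠ 0)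
    (hid : ∀ j, P j * Y j = Q j * X j) :
    (∏ j, P j / X j) * ∏ j, X j = ∏ j, P j ∧
    (∏ j, P j / X j) * ∏ j, Y j = ∏ j, Q j := by
  constructor
  · rw [Finset.prod_div_distrib, div_mul_cancel₀]
    exact Finset.prod_ne_zero_iff.mpr fun j _ => hX j
  · rw [← Finset.prod_mul_distrib]
    refine Finset.prod_congr rfl fun j _ => ?_
    rw [div_mul_eq_mul_div, hid j, mul_div_cancel_right₀ _ (hX j)]

lemma keyI (v δ A B : ℝ) (hA : 0 < A) (hB : 0 < B) (hδ : 0 ≤ δ)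
    (hs : δ ≠ 0 ↔ v ≠ 0) :
    ∃ w : ℝ, Real.sign w = Real.sign v ∧
      (A^v/(δ+A^v)) * B^w = (B^v/(δ+B^v)) * A^w := by
  by_cases hv : v = 0
  · refine ⟨0, by rw [hv], ?_⟩
    have hδ0 : δ = 0 := by by_contra h; exact (hs.mp h) hv
    simp [hv, hδ0]
  · have hδpos : 0 < δ := lt_of_le_of_ne hδ (Ne.symm (hs.mpr hv))
    by_cases hAB : A = B
    · exact ⟨v, rfl, by rw [hAB]⟩
    · have hPA : 0 < A ^ v := Real.rpow_pos_of_pos hA v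
      have hPB : 0 < B ^ v := Real.rpow_pos_of_pos hB v
      set Fa : ℝ := A ^ v / (δ + A ^ v) with hFa
      set Fb : ℝ := B ^ v / (δ + B ^ v) with hFb
      have hFaPos : 0 < Fa := div_pos hPA (by linarith)
      have hFbPos : 0 < Fb := div_pos hPB (by linarith)
      have hmono : ∀ P Q : ℝ, 0 < P → 0 < Q → P < Q → P/(δ+P) < Q/(δ+Q) := by
        intro P Q hP hQ hPQ
        rw [div_lt_div_iff₀ (by linarith) (by linarith)]
        nlinarith
      have hρpos : 0 < Fa / Fb := div_pos hFaPos hFbPos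
      have hABd : 0 < A / B := div_pos hA hB
      have hABne1 : A / B ≠ 1 := by
        intro h
        exact hAB (by field_simp at h; linarith)
      have hlogABne : Real.log (A / B) ≠ 0 := by
        intro h
        rcases Real.log_eq_zero.mp h with h | h | h
        · exact hABd.ne' h
        · exact hABne1 h
        · linarith
      refine ⟨Real.log (Fa / Fb) / Real.log (A / B), ?_, ?_⟩
      · -- sign part
        set w := Real.log (Fa / Fb) / Real.log (A / B) with hw
        rcases lt_or_gt_of_ne hv with hvneg | hvpos
        · rcases Ne.lt_or_gt hAB with hABlt | hABgt
          · -- v < 0, A < B : B^v < A^v, Fb < Fa, log ρ > 0, log(A/B) < 0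
            have h1 : B ^ v < A ^ v := Real.rpow_lt_rpow_of_neg hA hABlt hvneg
            have h2 : Fb < Fa := hmono _ _ hPB hPA h1
            have h3 : 0 < Real.log (Fa / Fb) := Real.log_pos ((one_lt_div hFbPos).mpr h2)
            have h4 : Real.log (A / B) < 0 := Real.log_neg hABd ((div_lt_one hB).mpr hABlt)
            have : w < 0 := div_neg_of_pos_of_neg h3 h4
            rw [Real.sign_of_neg this, Real.sign_of_neg hvneg]
          · have h1 : A ^ v < B ^ v := Real.rpow_lt_rpow_of_neg hB hABgt hvneg
            have h2 : Fa < Fb := hmono _ _ hPA hPB h1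
            have h3 : Real.log (Fa / Fb) < 0 := Real.log_neg hρpos ((div_lt_one hFbPos).mpr h2)
            have h4 : 0 < Real.log (A / B) := Real.log_pos ((one_lt_div hB).mpr hABgt)
            have : w < 0 := div_neg_of_neg_of_pos h3 h4
            rw [Real.sign_of_neg this, Real.sign_of_neg hvneg]
        · rcases Ne.lt_or_gt hAB with hABlt | hABgt
          · have h1 : A ^ v < B ^ v := Real.rpow_lt_rpow hA.le hABlt hvpos
            have h2 : Fa < Fb := hmono _ _ hPA hPB h1
            have h3 : Real.log (Fa / Fb) < 0 := Real.log_neg hρpos ((div_lt_one hFbPos).mpr h2)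
            have h4 : Real.log (A / B) < 0 := Real.log_neg hABd ((div_lt_one hB).mpr hABlt)
            have : 0 < w := div_pos_of_neg_of_neg h3 h4
            rw [Real.sign_of_pos this, Real.sign_of_pos hvpos]
          · have h1 : B ^ v < A ^ v := Real.rpow_lt_rpow hB.le hABgt hvpos
            have h2 : Fb < Fa := hmono _ _ hPB hPA h1
            have h3 : 0 < Real.log (Fa / Fb) := Real.log_pos ((one_lt_div hFbPos).mpr h2)
            have h4 : 0 < Real.log (A / B) := Real.log_pos ((one_lt_div hB).mpr hABgt)
            have : 0 < w := div_pos h3 h4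
            rw [Real.sign_of_pos this, Real.sign_of_pos hvpos]
      · -- identity part
        set w := Real.log (Fa / Fb) / Real.log (A / B) with hw
        have hwmul : Real.log (A / B) * w = Real.log (Fa / Fb) := by
          rw [hw, mul_div_cancel₀ _ hlogABne]
        have hAw : A ^ w = Real.exp (Real.log A * w) := Real.rpow_def_of_pos hA w
        have hBw : B ^ w = Real.exp (Real.log B * w) := Real.rpow_def_of_pos hB w
        have hsplit : Real.log A * w = Real.log B * w + Real.log (A / B) * w := by
          rw [Real.log_div hA.ne' hB.ne']; ring
        have hexp : Real.exp (Real.log (A / B) * w) = Fa / Fb := by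
          rw [hwmul, Real.exp_log hρpos]
        rw [hAw, hBw, hsplit, Real.exp_add, hexp]
        field_simp

lemma keyII (w A B : ℝ) (hA : 0 < A) (hB : 0 < B) :
    ∃ v δ : ℝ, 0 ≤ δ ∧ (δ ≠ 0 ↔ v ≠ 0) ∧ Real.sign v = Real.sign w ∧
      (A^v/(δ+A^v)) * B^w = (B^v/(δ+B^v)) * A^w := by
  by_cases hw : w = 0
  · exact ⟨0, 0, le_refl 0, by simp, by rw [hw], by simp [hw]⟩
  · refine ⟨2 * w, A ^ w * B ^ w, ?_, ?_, ?_, ?_⟩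
    · positivity
    · constructor
      · intro _ h; exact hw (by linarith [mul_eq_zero.mp h])
      · intro _; positivity
    · rcases lt_or_gt_of_ne hw with h | h
      · rw [Real.sign_of_neg h, Real.sign_of_neg (by linarith : 2 * w < 0)]
      · rw [Real.sign_of_pos h, Real.sign_of_pos (by linarith : 0 < 2 * w)]
    · have hAw : 0 < A ^ w := Real.rpow_pos_of_pos hA w
      have hBw : 0 < B ^ w := Real.rpow_pos_of_pos hB w
      have h2A : A ^ (2 * w) = A ^ w * A ^ w := by
        rw [two_mul, Real.rpow_add hA]
      have h2B : B ^ (2 * w) = B ^ w * B ^ w := by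
        rw [two_mul, Real.rpow_add hB]
      rw [h2A, h2B]
      field_simp
      ring

/-- Theorem `hill`. -/
theorem stmt19 {n m : ℕ}
    (y y' : Fin m → Fin n → ℝ)
    (a b : Fin n → ℝ) (ha : ∀ i, 0 < a i) (hb : ∀ i, 0 < b i) :
    ((∀ (κ : Fin m → ℝ) (δ v : Fin m → Fin n → ℝ),
        (∀ r, 0 < κ r) → (∀ r j, 0 ≤ δ r j) → (∀ r j, δ r j ≠ 0 ↔ v r j ≠ 0) →
        ∃ (lam : Fin m → ℝ) (w : Fin m → Fin n → ℝ), (∀ r, 0 < lam r) ∧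
          (∀ r i, Real.sign (v r i) = Real.sign (w r i)) ∧
          hillf y y' κ δ v a = plf y y' lam w a ∧
          hillf y y' κ δ v b = plf y y' lam w b) ∧
      (∀ (lam : Fin m → ℝ) (w : Fin m → Fin n → ℝ), (∀ r, 0 < lam r) →
        ∃ (κ : Fin m → ℝ) (δ v : Fin m → Fin n → ℝ),
          (∀ r, 0 < κ r) ∧ (∀ r j, 0 ≤ δ r j) ∧ (∀ r j, δ r j ≠ 0 ↔ v r j ≠ 0) ∧
          (∀ r i, Real.sign (v r i) = Real.sign (w r i)) ∧
          hillf y y' κ δ v a = plf y y' lam w a ∧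
          hillf y y' κ δ v b = plf y y' lam w b)) ∧
    ((∃ (lam : Fin m → ℝ) (w : Fin m → Fin n → ℝ), (∀ r, 0 < lam r) ∧
        plf y y' lam w a = plf y y' lam w b) ↔
      (∃ (κ : Fin m → ℝ) (δ v : Fin m → Fin n → ℝ),
        (∀ r, 0 < κ r) ∧ (∀ r j, 0 ≤ δ r j) ∧ (∀ r j, δ r j ≠ 0 ↔ v r j ≠ 0) ∧
        hillf y y' κ δ v a = hillf y y' κ δ v b)) := by
  have partI : ∀ (κ : Fin m → ℝ) (δ v : Fin m → Fin n → ℝ),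
      (∀ r, 0 < κ r) → (∀ r j, 0 ≤ δ r j) → (∀ r j, δ r j ≠ 0 ↔ v r j ≠ 0) →
      ∃ (lam : Fin m → ℝ) (w : Fin m → Fin n → ℝ), (∀ r, 0 < lam r) ∧
        (∀ r i, Real.sign (v r i) = Real.sign (w r i)) ∧
        hillf y y' κ δ v a = plf y y' lam w a ∧
        hillf y y' κ δ v b = plf y y' lam w b := by
    intro κ δ v hκ hδ hsupp
    choose w hsgn hid using fun r j =>
      keyI (v r j) (δ r j) (a j) (b j) (ha j) (hb j) (hδ r j) (hsupp r j)
    have hFaPos : ∀ r j, 0 < a j ^ v r j / (δ r j + a j ^ v r j) := fun r j => by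
      have h1 : 0 < a j ^ v r j := Real.rpow_pos_of_pos (ha j) _
      exact div_pos h1 (by linarith [hδ r j])
    have haw : ∀ r j, (0:ℝ) < a j ^ w r j := fun r j => Real.rpow_pos_of_pos (ha j) _
    have hbw : ∀ r j, (0:ℝ) < b j ^ w r j := fun r j => Real.rpow_pos_of_pos (hb j) _
    refine ⟨fun r => κ r * ∏ j, (a j ^ v r j / (δ r j + a j ^ v r j)) / a j ^ w r j,
      w, ?_, fun r i => (hsgn r i).symm, ?_, ?_⟩
    · intro r
      refine mul_pos (hκ r) (Finset.prod_pos fun j _ => div_pos (hFaPos r j) (haw r j))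
    · funext i
      refine Finset.sum_congr rfl fun r _ => ?_
      have := (prod_transfer (fun j => a j ^ v r j / (δ r j + a j ^ v r j))
        (fun j => b j ^ v r j / (δ r j + b j ^ v r j))
        (fun j => a j ^ w r j) (fun j => b j ^ w r j)
        (fun j => (haw r j).ne') (fun j => hid r j)).1
      rw [← this]; ring
    · funext i
      refine Finset.sum_congr rfl fun r _ => ?_
      have := (prod_transfer (fun j => a j ^ v r j / (δ r j + a j ^ v r j))
        (fun j => b j ^ v r j / (δ r j + b j ^ v r j))
        (fun j => a j ^ w r j) (fun j => b j ^ w r j)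
        (fun j => (haw r j).ne') (fun j => hid r j)).2
      rw [← this]; ring
  have partII : ∀ (lam : Fin m → ℝ) (w : Fin m → Fin n → ℝ), (∀ r, 0 < lam r) →
      ∃ (κ : Fin m → ℝ) (δ v : Fin m → Fin n → ℝ),
        (∀ r, 0 < κ r) ∧ (∀ r j, 0 ≤ δ r j) ∧ (∀ r j, δ r j ≠ 0 ↔ v r j ≠ 0) ∧
        (∀ r i, Real.sign (v r i) = Real.sign (w r i)) ∧
        hillf y y' κ δ v a = plf y y' lam w a ∧
        hillf y y' κ δ v b = plf y y' lam w b := by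
    intro lam w hlam
    choose v δ hδ0 hsupp hsgn hid using fun r j => keyII (w r j) (a j) (b j) (ha j) (hb j)
    have hFaPos : ∀ r j, 0 < a j ^ v r j / (δ r j + a j ^ v r j) := fun r j => by
      have h1 : 0 < a j ^ v r j := Real.rpow_pos_of_pos (ha j) _
      exact div_pos h1 (by linarith [hδ0 r j])
    have hFbPos : ∀ r j, 0 < b j ^ v r j / (δ r j + b j ^ v r j) := fun r j => by
      have h1 : 0 < b j ^ v r j := Real.rpow_pos_of_pos (hb j) _
      exact div_pos h1 (by linarith [hδ0 r j])
    have haw : ∀ r j, (0:ℝ) < a j ^ w r j := fun r j => Real.rpow_pos_of_pos (ha j) _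
    refine ⟨fun r => lam r * ∏ j, a j ^ w r j / (a j ^ v r j / (δ r j + a j ^ v r j)),
      δ, v, ?_, hδ0, hsupp, hsgn, ?_, ?_⟩
    · intro r
      exact mul_pos (hlam r) (Finset.prod_pos fun j _ => div_pos (haw r j) (hFaPos r j))
    · funext i
      refine Finset.sum_congr rfl fun r _ => ?_
      have := (prod_transfer (fun j => a j ^ w r j) (fun j => b j ^ w r j)
        (fun j => a j ^ v r j / (δ r j + a j ^ v r j))
        (fun j => b j ^ v r j / (δ r j + b j ^ v r j))
        (fun j => (hFaPos r j).ne') (fun j => by linear_combination -(hid r j))).1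
      rw [← this]; ring
    · funext i
      refine Finset.sum_congr rfl fun r _ => ?_
      have := (prod_transfer (fun j => a j ^ w r j) (fun j => b j ^ w r j)
        (fun j => a j ^ v r j / (δ r j + a j ^ v r j))
        (fun j => b j ^ v r j / (δ r j + b j ^ v r j))
        (fun j => (hFaPos r j).ne') (fun j => by linear_combination -(hid r j))).2
      rw [← this]; ring
  refine ⟨⟨partI, partII⟩, ?_, ?_⟩
  · rintro ⟨lam, w, hlam, heq⟩
    obtain ⟨κ, δ, v, hκ, hδ, hsupp, _, hha, hhb⟩ := partII lam w hlam
    exact ⟨κ, δ, v, hκ, hδ, hsupp, by rw [hha, hhb, heq]⟩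
  · rintro ⟨κ, δ, v, hκ, hδ, hsupp, heq⟩
    obtain ⟨lam, w, hlam, _, hha, hhb⟩ := partI κ δ v hκ hδ hsupp
    exact ⟨lam, w, hlam, by rw [← hha, ← hhb, heq]⟩
end CRN
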